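/- A function f : ℕ^d → ℕ is stably computable by an output-oblivious CRN if and only if f is stably computable by an output-monotonic CRN (one in which no reaction can decrease the count of the output species, i.e., r(Y) ≤ p(Y) for every reaction (r, p)). -/

import Mathlib

/-- A chemical reaction network with species type `σ`, designated input species
`inputs i` for each of the `d` inputs, an output species, and a leader species. -/
structure CRN (d : ℕ) (σ : Type) [Fintype σ] [DecidableEq σ] where
  /-- Each reaction is a pair `(r, p)` of reactant counts and product counts. -/
  reactions : Finset ((σ → ℕ) × (σ → ℕ))
  inputs : Fin d → σ
  output : σ
  leader : σ
  inputs_inj : Function.Injective inputs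
  leader_not_input : ∀ i, inputs i ≠ leader

namespace CRN

variable {d : ℕ} {σ : Type} [Fintype σ] [DecidableEq σ]

/-- One reaction step: some reaction `(r, p)` with `r ≤ c` pointwise fires,
yielding `c - r + p`. -/
def Step (C : CRN d σ) (c c' : σ → ℕ) : Prop :=
  ∃ rp ∈ C.reactions, rp.1 ≤ c ∧ c' = c - rp.1 + rp.2

/-- Reachability by a finite sequence of reaction steps. -/
def Reachable (C : CRN d σ) : (σ → ℕ) → (σ → ℕ) → Prop :=
  Relation.ReflTransGen C.Step

/-- The initial configuration encoding input `x`: count `x i` of input species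
`inputs i`, count 1 of the leader, count 0 of everything else. -/
def init (C : CRN d σ) (x : Fin d → ℕ) : σ → ℕ :=
  fun s => (∑ i, if C.inputs i = s then x i else 0) + (if s = C.leader then 1 else 0)

/-- A configuration is stable if the output count never changes from it. -/
def Stable (C : CRN d σ) (c : σ → ℕ) : Prop :=
  ∀ c', C.Reachable c c' → c' C.output = c C.output

/-- `C` stably computes `f` if from every configuration reachable from an initial
configuration, a stable configuration with correct output count is reachable. -/
def StablyComputes (C : CRN d σ) (f : (Fin d → ℕ) → ℕ) : Prop :=
  ∀ x c, C.Reachable (C.init x) c →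
    ∃ o, C.Reachable c o ∧ C.Stable o ∧ o C.output = f x

/-- A CRN is output-oblivious if the output species is never a reactant. -/
def OutputOblivious (C : CRN d σ) : Prop :=
  ∀ rp ∈ C.reactions, rp.1 C.output = 0

/-- A CRN is output-monotonic if no reaction decreases the output species count. -/
def OutputMonotonic (C : CRN d σ) : Prop :=
  ∀ rp ∈ C.reactions, rp.1 C.output ≤ rp.2 C.output

end CRN

/-- `f` is obliviously-computable if some output-oblivious CRN stably computes it. -/
def ObliviouslyComputable {d : ℕ} (f : (Fin d → ℕ) → ℕ) : Prop :=
  ∃ (n : ℕ) (C : CRN d (Fin n)), C.OutputOblivious ∧ C.StablyComputes f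

namespace ObliviousAux

open CRN

variable {d n : ℕ}

/-- Embedding of old species into the extended species set. -/
def emb (t : Fin n) : Fin (n + 2) := ⟨t, by omega⟩

/-- Fresh species representing an unconverted initial output token. -/
def Asp (n : ℕ) : Fin (n + 2) := ⟨n, by omega⟩

/-- Fresh output species. -/
def Ysp (n : ℕ) : Fin (n + 2) := ⟨n + 1, by omega⟩

/-- Extend a configuration/vector on old species by values at `Asp` and `Ysp`. -/
def ext (v : Fin n → ℕ) (a y : ℕ) : Fin (n + 2) → ℕ :=
  fun s => if h : (s : ℕ) < n then v ⟨s, h⟩ else if (s : ℕ) = n then a else y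

@[simp] lemma ext_emb (v : Fin n → ℕ) (a y : ℕ) (t : Fin n) : ext v a y (emb t) = v t := by
  simp [ext, emb]

@[simp] lemma ext_A (v : Fin n → ℕ) (a y : ℕ) : ext v a y (Asp n) = a := by
  simp [ext, Asp]

@[simp] lemma ext_Y (v : Fin n → ℕ) (a y : ℕ) : ext v a y (Ysp n) = y := by
  simp only [ext, Ysp]
  exact (dif_neg (by omega)).trans (if_neg (by omega))

lemma emb_inj : Function.Injective (emb (n := n)) := by
  intro a b h
  have h' := congrArg Fin.val h
  simp only [emb] at h'
  exact Fin.ext h'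

lemma emb_ne_A (t : Fin n) : emb t ≠ Asp n := by
  intro h
  have h' : (t : ℕ) = n := congrArg Fin.val h
  omega

lemma emb_ne_Y (t : Fin n) : emb t ≠ Ysp n := by
  intro h
  have h' : (t : ℕ) = n + 1 := congrArg Fin.val h
  omega

lemma A_ne_Y : Asp n ≠ Ysp n := by
  intro h
  have h' : n = n + 1 := congrArg Fin.val h
  omega

lemma cases_fin (s : Fin (n + 2)) : (∃ t, s = emb t) ∨ s = Asp n ∨ s = Ysp n := by
  rcases Nat.lt_trichotomy (s : ℕ) n with h | h | h
  · exact Or.inl ⟨⟨s, h⟩, Fin.ext rfl⟩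
  · exact Or.inr (Or.inl (Fin.ext h))
  · exact Or.inr (Or.inr (Fin.ext (show (s : ℕ) = n + 1 by
      have := s.isLt; omega)))

/-- The conversion reaction `A → output + Y`. -/
def convR (C : CRN d (Fin n)) : ((Fin (n + 2) → ℕ) × (Fin (n + 2) → ℕ)) :=
  (ext 0 1 0, ext (fun t => if t = C.output then 1 else 0) 0 1)

/-- The output-oblivious CRN simulating an output-monotonic CRN. -/
def mon (C : CRN d (Fin n)) : CRN d (Fin (n + 2)) where
  reactions := (C.reactions.image fun rp =>
      (ext rp.1 0 0, ext rp.2 0 (rp.2 C.output - rp.1 C.output))) ∪ {convR C}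
  inputs := fun i => if C.inputs i = C.output then Asp n else emb (C.inputs i)
  output := Ysp n
  leader := if C.leader = C.output then Asp n else emb C.leader
  inputs_inj := by
    intro i j hij
    dsimp only at hij
    split_ifs at hij with h1 h2 h2
    · exact C.inputs_inj (h1.trans h2.symm)
    · exact absurd hij.symm (emb_ne_A _)
    · exact absurd hij (emb_ne_A _)
    · exact C.inputs_inj (emb_inj hij)
  leader_not_input := by
    intro i
    split_ifs with h1 h2 h2
    · exact fun _ => C.leader_not_input i (h1.trans h2.symm)
    · exact fun h => emb_ne_A _ h.symm
    · exact fun h => emb_ne_A _ h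
    · exact fun h => C.leader_not_input i (emb_inj h)

@[simp] lemma mon_inputs (C : CRN d (Fin n)) (i : Fin d) :
    (mon C).inputs i = if C.inputs i = C.output then Asp n else emb (C.inputs i) := rfl

@[simp] lemma mon_output (C : CRN d (Fin n)) : (mon C).output = Ysp n := rfl

@[simp] lemma mon_leader (C : CRN d (Fin n)) :
    (mon C).leader = if C.leader = C.output then Asp n else emb C.leader := rfl

lemma mon_reactions (C : CRN d (Fin n)) :
    (mon C).reactions = (C.reactions.image fun rp =>
      (ext rp.1 0 0, ext rp.2 0 (rp.2 C.output - rp.1 C.output))) ∪ {convR C} := rfl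

/-- Projection of an extended configuration back to an old configuration:
`A` tokens count as output tokens. -/
def proj (C : CRN d (Fin n)) (c : Fin (n + 2) → ℕ) : Fin n → ℕ :=
  fun t => c (emb t) + if t = C.output then c (Asp n) else 0

lemma mon_oblivious (C : CRN d (Fin n)) : (mon C).OutputOblivious := by
  intro rp' hmem
  rw [mon_reactions, Finset.mem_union, Finset.mem_image, Finset.mem_singleton] at hmem
  rw [mon_output]
  rcases hmem with ⟨rp, _, rfl⟩ | rfl
  · exact ext_Y _ _ _
  · exact ext_Y _ _ _

lemma step_key (C : CRN d (Fin n)) (hm : C.OutputMonotonic) {c c' : Fin (n + 2) → ℕ}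
    (h : (mon C).Step c c') :
    Relation.ReflTransGen C.Step (proj C c) (proj C c') ∧
      c' (Asp n) ≤ c (Asp n) ∧
      (c (Ysp n) = c (emb C.output) → c' (Ysp n) = c' (emb C.output)) := by
  obtain ⟨rp', hmem, hle, rfl⟩ := h
  rw [mon_reactions, Finset.mem_union, Finset.mem_image, Finset.mem_singleton] at hmem
  rcases hmem with ⟨rp, hrp, rfl⟩ | rfl
  · have hle' : ∀ t, rp.1 t ≤ c (emb t) := by
      intro t
      simpa using Pi.le_def.mp hle (emb t)
    have hmo := hm rp hrp
    refine ⟨Relation.ReflTransGen.single ⟨rp, hrp, ?_, ?_⟩, ?_, ?_⟩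
    · exact Pi.le_def.mpr fun t => le_trans (hle' t) (Nat.le_add_right _ _)
    · funext t
      simp only [proj, Pi.add_apply, Pi.sub_apply, ext_emb, ext_A]
      split_ifs with ht
      · subst ht
        have := hle' C.output
        omega
      · have := hle' t
        omega
    · simp only [Pi.add_apply, Pi.sub_apply, ext_A]
      omega
    · intro hJ
      simp only [Pi.add_apply, Pi.sub_apply, ext_Y, ext_emb]
      have := hle' C.output
      omega
  · have hA : 1 ≤ c (Asp n) := by
      simpa [convR] using Pi.le_def.mp hle (Asp n)
    have hcA : (c - (convR C).1 + (convR C).2) (Asp n) = c (Asp n) - 1 := by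
      simp [convR]
    have hcY : (c - (convR C).1 + (convR C).2) (Ysp n) = c (Ysp n) + 1 := by
      simp [convR]
    have hcE : ∀ t : Fin n, (c - (convR C).1 + (convR C).2) (emb t)
        = c (emb t) + (if t = C.output then 1 else 0) := by
      intro t
      simp [convR]
    have hproj : proj C (c - (convR C).1 + (convR C).2) = proj C c := by
      funext t
      simp only [proj, hcE, hcA]
      split_ifs with ht
      · omega
      · omega
    refine ⟨hproj ▸ Relation.ReflTransGen.refl, ?_, ?_⟩
    · rw [hcA]
      omega
    · intro hJ
      rw [hcY, hcE, if_pos rfl, hJ]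

lemma reach_key (C : CRN d (Fin n)) (hm : C.OutputMonotonic) {c c' : Fin (n + 2) → ℕ}
    (h : Relation.ReflTransGen (mon C).Step c c') :
    Relation.ReflTransGen C.Step (proj C c) (proj C c') ∧
      c' (Asp n) ≤ c (Asp n) ∧
      (c (Ysp n) = c (emb C.output) → c' (Ysp n) = c' (emb C.output)) := by
  induction h with
  | refl => exact ⟨Relation.ReflTransGen.refl, le_refl _, id⟩
  | tail hab hbc ih =>
    obtain ⟨h1, h2, h3⟩ := step_key C hm hbc
    exact ⟨ih.1.trans h1, le_trans h2 ih.2.1, fun hJ => h3 (ih.2.2 hJ)⟩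

lemma conv_proj (C : CRN d (Fin n)) {c : Fin (n + 2) → ℕ} (h1 : 1 ≤ c (Asp n)) :
    proj C (c - (convR C).1 + (convR C).2) = proj C c := by
  have hcA : (c - (convR C).1 + (convR C).2) (Asp n) = c (Asp n) - 1 := by
    simp [convR]
  have hcE : ∀ t : Fin n, (c - (convR C).1 + (convR C).2) (emb t)
      = c (emb t) + (if t = C.output then 1 else 0) := by
    intro t
    simp [convR]
  funext t
  simp only [proj, hcE, hcA]
  split_ifs with ht
  · omega
  · omega

lemma drain (C : CRN d (Fin n)) :
    ∀ (k : ℕ) (c : Fin (n + 2) → ℕ), c (Asp n) = k →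
      ∃ c', Relation.ReflTransGen (mon C).Step c c' ∧ c' (Asp n) = 0 ∧ proj C c' = proj C c := by
  intro k
  induction k with
  | zero => exact fun c h => ⟨c, Relation.ReflTransGen.refl, h, rfl⟩
  | succ k ih =>
    intro c hc
    have hstep : (mon C).Step c (c - (convR C).1 + (convR C).2) := by
      refine ⟨convR C, ?_, ?_, rfl⟩
      · rw [mon_reactions, Finset.mem_union, Finset.mem_singleton]
        exact Or.inr rfl
      · refine Pi.le_def.mpr fun s => ?_
        rcases cases_fin s with ⟨t, rfl⟩ | rfl | rfl
        · rw [show (convR C).1 (emb t) = 0 from by simp [convR]]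
          exact Nat.zero_le _
        · rw [show (convR C).1 (Asp n) = 1 from by simp [convR]]
          omega
        · rw [show (convR C).1 (Ysp n) = 0 from by simp [convR]]
          exact Nat.zero_le _
    have hA1 : (c - (convR C).1 + (convR C).2) (Asp n) = k := by
      have : (c - (convR C).1 + (convR C).2) (Asp n) = c (Asp n) - 1 := by
        simp [convR]
      omega
    obtain ⟨c', hr, h0, hp⟩ := ih _ hA1
    exact ⟨c', Relation.ReflTransGen.head hstep hr, h0,
      hp.trans (conv_proj C (by omega))⟩

lemma lift_step (C : CRN d (Fin n)) {c : Fin (n + 2) → ℕ} (hA : c (Asp n) = 0)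
    {e' : Fin n → ℕ} (h : C.Step (proj C c) e') :
    ∃ c', (mon C).Step c c' ∧ c' (Asp n) = 0 ∧ proj C c' = e' := by
  obtain ⟨rp, hrp, hle, rfl⟩ := h
  have hle' : ∀ t, rp.1 t ≤ c (emb t) := by
    intro t
    have := Pi.le_def.mp hle t
    simp only [proj] at this
    by_cases ht : t = C.output
    · rw [if_pos ht, hA] at this
      omega
    · rwa [if_neg ht, Nat.add_zero] at this
  refine ⟨c - ext rp.1 0 0 + ext rp.2 0 (rp.2 C.output - rp.1 C.output),
    ⟨(ext rp.1 0 0, ext rp.2 0 (rp.2 C.output - rp.1 C.output)), ?_, ?_, rfl⟩, ?_, ?_⟩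
  · rw [mon_reactions, Finset.mem_union, Finset.mem_image]
    exact Or.inl ⟨rp, hrp, rfl⟩
  · refine Pi.le_def.mpr fun s => ?_
    rcases cases_fin s with ⟨t, rfl⟩ | rfl | rfl
    · simpa using hle' t
    · simp
    · simp
  · simp only [Pi.add_apply, Pi.sub_apply, ext_A]
    omega
  · funext t
    simp only [proj, Pi.add_apply, Pi.sub_apply, ext_emb, ext_A]
    split_ifs with ht
    · subst ht
      have := hle' C.output
      omega
    · have := hle' t
      omega

lemma lift_reach (C : CRN d (Fin n)) {d₀ d₁ : Fin n → ℕ}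
    (h : Relation.ReflTransGen C.Step d₀ d₁) :
    ∀ c : Fin (n + 2) → ℕ, c (Asp n) = 0 → proj C c = d₀ →
      ∃ c', Relation.ReflTransGen (mon C).Step c c' ∧ c' (Asp n) = 0 ∧ proj C c' = d₁ := by
  induction h with
  | refl => exact fun c hA hp => ⟨c, Relation.ReflTransGen.refl, hA, hp⟩
  | tail hab hbc ih =>
    intro c hA hp
    obtain ⟨c₁, hr₁, hA₁, hp₁⟩ := ih c hA hp
    obtain ⟨c₂, hs₂, hA₂, hp₂⟩ := lift_step C hA₁ (show C.Step (proj C c₁) _ by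
      rw [hp₁]; exact hbc)
    exact ⟨c₂, hr₁.tail hs₂, hA₂, hp₂⟩

lemma init_Y (C : CRN d (Fin n)) (x : Fin d → ℕ) : (mon C).init x (Ysp n) = 0 := by
  have h1 : (∑ i, if (mon C).inputs i = Ysp n then x i else 0) = 0 :=
    Finset.sum_eq_zero fun i _ => by
      rw [mon_inputs]
      by_cases h : C.inputs i = C.output
      · rw [if_pos h, if_neg A_ne_Y]
      · rw [if_neg h, if_neg (emb_ne_Y _)]
  have h2 : (if Ysp n = (mon C).leader then 1 else 0) = 0 := by
    rw [mon_leader]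
    by_cases h : C.leader = C.output
    · rw [if_pos h, if_neg (fun h' => A_ne_Y h'.symm)]
    · rw [if_neg h, if_neg (fun h' => emb_ne_Y _ h'.symm)]
  show (∑ i, if (mon C).inputs i = Ysp n then x i else 0)
      + (if Ysp n = (mon C).leader then 1 else 0) = 0
  rw [h1, h2]

lemma init_embout (C : CRN d (Fin n)) (x : Fin d → ℕ) :
    (mon C).init x (emb C.output) = 0 := by
  have h1 : (∑ i, if (mon C).inputs i = emb C.output then x i else 0) = 0 :=
    Finset.sum_eq_zero fun i _ => by
      rw [mon_inputs]
      by_cases h : C.inputs i = C.output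
      · rw [if_pos h, if_neg (fun h' => emb_ne_A _ h'.symm)]
      · rw [if_neg h, if_neg (fun h' => h (emb_inj h'))]
  have h2 : (if emb C.output = (mon C).leader then 1 else 0) = 0 := by
    rw [mon_leader]
    by_cases h : C.leader = C.output
    · rw [if_pos h, if_neg (emb_ne_A _)]
    · rw [if_neg h, if_neg (fun h' => h (emb_inj h').symm)]
  show (∑ i, if (mon C).inputs i = emb C.output then x i else 0)
      + (if emb C.output = (mon C).leader then 1 else 0) = 0
  rw [h1, h2]

lemma proj_init (C : CRN d (Fin n)) (x : Fin d → ℕ) :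
    proj C ((mon C).init x) = C.init x := by
  funext t
  by_cases ht : t = C.output
  · subst ht
    have h1 : ∀ i : Fin d, (if (mon C).inputs i = Asp n then x i else 0)
        = (if C.inputs i = C.output then x i else 0) := fun i => by
      rw [mon_inputs]
      by_cases h : C.inputs i = C.output
      · rw [if_pos h, if_pos rfl, if_pos h]
      · rw [if_neg h, if_neg (emb_ne_A _), if_neg h]
    have h2 : (if Asp n = (mon C).leader then 1 else 0)
        = (if C.output = C.leader then 1 else 0) := by
      rw [mon_leader]
      by_cases h : C.leader = C.output
      · rw [if_pos h, if_pos rfl, if_pos h.symm]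
      · rw [if_neg h, if_neg (fun h' => emb_ne_A _ h'.symm), if_neg (fun h' => h h'.symm)]
    have hA : (mon C).init x (Asp n) = C.init x C.output := by
      show (∑ i, if (mon C).inputs i = Asp n then x i else 0)
            + (if Asp n = (mon C).leader then 1 else 0)
          = (∑ i, if C.inputs i = C.output then x i else 0)
            + (if C.output = C.leader then 1 else 0)
      rw [Finset.sum_congr rfl fun i _ => h1 i, h2]
    show (mon C).init x (emb C.output)
        + (if C.output = C.output then (mon C).init x (Asp n) else 0) = C.init x C.output
    rw [if_pos rfl, init_embout, Nat.zero_add, hA]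
  · have h1 : ∀ i : Fin d, (if (mon C).inputs i = emb t then x i else 0)
        = (if C.inputs i = t then x i else 0) := fun i => by
      rw [mon_inputs]
      by_cases h : C.inputs i = C.output
      · rw [if_pos h, if_neg (fun h' => emb_ne_A _ h'.symm),
          if_neg (fun h' => ht (h'.symm.trans h))]
      · by_cases h3 : C.inputs i = t
        · rw [if_neg h, if_pos (by rw [h3]), if_pos h3]
        · rw [if_neg h, if_neg (fun h' => h3 (emb_inj h')), if_neg h3]
    have h2 : (if emb t = (mon C).leader then 1 else 0)
        = (if t = C.leader then 1 else 0) := by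
      rw [mon_leader]
      by_cases h : C.leader = C.output
      · rw [if_pos h, if_neg (emb_ne_A t), if_neg (fun h' => ht (h'.trans h))]
      · by_cases h3 : t = C.leader
        · rw [if_neg h, if_pos (by rw [h3]), if_pos h3]
        · rw [if_neg h, if_neg (fun h' => h3 (emb_inj h')), if_neg h3]
    have hT : (mon C).init x (emb t) = C.init x t := by
      show (∑ i, if (mon C).inputs i = emb t then x i else 0)
            + (if emb t = (mon C).leader then 1 else 0)
          = (∑ i, if C.inputs i = t then x i else 0)
            + (if t = C.leader then 1 else 0)
      rw [Finset.sum_congr rfl fun i _ => h1 i, h2]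
    show (mon C).init x (emb t)
        + (if t = C.output then (mon C).init x (Asp n) else 0) = C.init x t
    rw [if_neg ht, Nat.add_zero, hT]

theorem mon_computes (C : CRN d (Fin n)) (hm : C.OutputMonotonic)
    (f : (Fin d → ℕ) → ℕ) (hs : C.StablyComputes f) : (mon C).StablyComputes f := by
  intro x c hreach
  have hkey := reach_key C hm hreach
  have hπc : Relation.ReflTransGen C.Step (C.init x) (proj C c) := by
    have := hkey.1
    rwa [proj_init] at this
  have hJc : c (Ysp n) = c (emb C.output) :=
    hkey.2.2 (by rw [init_Y, init_embout])
  obtain ⟨c₀, hr₀, hA₀, hp₀⟩ := drain C (c (Asp n)) c rfl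
  obtain ⟨o, ho_reach, ho_stable, ho_out⟩ := hs x (proj C c₀) (by
    show Relation.ReflTransGen C.Step (C.init x) (proj C c₀)
    rw [hp₀]; exact hπc)
  obtain ⟨c₁, hr₁, hA₁, hp₁⟩ := lift_reach C ho_reach c₀ hA₀ rfl
  have hr : Relation.ReflTransGen (mon C).Step c c₁ := hr₀.trans hr₁
  have hJ₁ : c₁ (Ysp n) = c₁ (emb C.output) := (reach_key C hm hr).2.2 hJc
  have hproj₁ : proj C c₁ C.output = c₁ (emb C.output) := by
    show c₁ (emb C.output) + (if C.output = C.output then c₁ (Asp n) else 0) = _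
    rw [if_pos rfl, hA₁, Nat.add_zero]
  have hval : c₁ (Ysp n) = f x := by
    rw [hJ₁, ← hproj₁, hp₁, ho_out]
  refine ⟨c₁, hr, ?_, ?_⟩
  · intro c₂ hreach₂
    have hk₂ := reach_key C hm hreach₂
    have hA₂ : c₂ (Asp n) = 0 := by
      have := hk₂.2.1
      omega
    have hJ₂ : c₂ (Ysp n) = c₂ (emb C.output) := hk₂.2.2 hJ₁
    have hstab : proj C c₂ C.output = o C.output := by
      refine ho_stable (proj C c₂) ?_
      show Relation.ReflTransGen C.Step o (proj C c₂)
      rw [← hp₁]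
      exact hk₂.1
    have hproj₂ : proj C c₂ C.output = c₂ (emb C.output) := by
      show c₂ (emb C.output) + (if C.output = C.output then c₂ (Asp n) else 0) = _
      rw [if_pos rfl, hA₂, Nat.add_zero]
    show c₂ (Ysp n) = c₁ (Ysp n)
    rw [hJ₂, ← hproj₂, hstab, ho_out, ← hval]
  · show c₁ (Ysp n) = f x
    exact hval

end ObliviousAux

/-- `f` is stably computable by an output-oblivious CRN iff it is stably
computable by an output-monotonic CRN. -/
theorem outputOblivious_iff_outputMonotonic {d : ℕ} (f : (Fin d → ℕ) → ℕ) :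
    (∃ (n : ℕ) (C : CRN d (Fin n)), C.OutputOblivious ∧ C.StablyComputes f) ↔
      (∃ (n : ℕ) (C : CRN d (Fin n)), C.OutputMonotonic ∧ C.StablyComputes f) := by
  constructor
  · rintro ⟨n, C, hob, hs⟩
    exact ⟨n, C, fun rp h => by rw [hob rp h]; exact Nat.zero_le _, hs⟩
  · rintro ⟨n, C, hm, hs⟩
    exact ⟨n + 2, ObliviousAux.mon C, ObliviousAux.mon_oblivious C,
      ObliviousAux.mon_computes C hm f hs⟩
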